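/- For a pure bipartite state |φ⟩ all of whose Schmidt coefficients are ≤ 1/√2 (equivalently, all eigenvalues of the reduced density matrix are ≤ 1/2), M(|φ⟩⟨φ|) equals the entropy of entanglement S_vN(Tr_B |φ⟩⟨φ|). -/

import Mathlib

open Matrix Kronecker Finset
open scoped ComplexOrder

attribute [local instance] Classical.propDecidable

noncomputable section

/-- nearest integer multiple of `y` to `x`, ties broken downward; `0` if `y = 0`. -/
def nim (y x : ℝ) : ℝ :=
  if y = 0 then 0
  else if x - y * ⌊x / y⌋ ≤ y * ⌈x / y⌉ - x then y * ⌊x / y⌋ else y * ⌈x / y⌉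

/-- partial trace over the second (B) factor -/
def ptraceB {α β : Type*} [Fintype α] [Fintype β]
    (ρ : Matrix (α × β) (α × β) ℂ) : Matrix α α ℂ :=
  fun a a' => ∑ b : β, ρ (a, b) (a', b)

/-- partial trace over the first (A) factor -/
def ptraceA {α β : Type*} [Fintype α] [Fintype β]
    (ρ : Matrix (α × β) (α × β) ℂ) : Matrix β β ℂ :=
  fun b b' => ∑ a : α, ρ (a, b) (a, b')

/-- the (real) eigenvalues of a Hermitian matrix, junk value `0` otherwise -/
def evalsR {n : Type*} [Fintype n] [DecidableEq n] (A : Matrix n n ℂ) : n → ℝ :=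
  if h : A.IsHermitian then h.eigenvalues else 0

/-- orthogonal projection onto the η-eigenspace of a Hermitian matrix -/
def eigProj {n : Type*} [Fintype n] [DecidableEq n] (ρ : Matrix n n ℂ) (η : ℝ) :
    Matrix n n ℂ :=
  if h : ρ.IsHermitian then
    ∑ k ∈ univ.filter (fun k => h.eigenvalues k = η),
      vecMulVec (fun i => h.eigenvectorBasis k i) (star fun i => h.eigenvectorBasis k i)
  else 0

/-- truncation of ρ down to the η-eigenspace: `η • P_η` -/
def trunc {n : Type*} [Fintype n] [DecidableEq n] (ρ : Matrix n n ℂ) (η : ℝ) :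
    Matrix n n ℂ := (η : ℂ) • eigProj ρ η

/-- dimension of the η-eigenspace -/
def dimEig {n : Type*} [Fintype n] [DecidableEq n] (ρ : Matrix n n ℂ) (η : ℝ) : ℕ :=
  if h : ρ.IsHermitian then (univ.filter (fun k => h.eigenvalues k = η)).card else 0

/-- a single term of the measure `M` -/
def Mterm (η T lam : ℝ) : ℝ := -(|lam - nim η lam| * Real.logb 2 (lam / T))

/-- the measure `M` seen from side A -/
def MmeasA {α β : Type*} [Fintype α] [Fintype β] [DecidableEq α] [DecidableEq β]
    (ρ : Matrix (α × β) (α × β) ℂ) : ℝ :=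
  ∑ η ∈ Finset.image (evalsR ρ) univ, ∑ i : α,
    Mterm η (η * (dimEig ρ η : ℝ)) (evalsR (ptraceB (trunc ρ η)) i)

/-- the measure `M` seen from side B -/
def MmeasB {α β : Type*} [Fintype α] [Fintype β] [DecidableEq α] [DecidableEq β]
    (ρ : Matrix (α × β) (α × β) ℂ) : ℝ :=
  ∑ η ∈ Finset.image (evalsR ρ) univ, ∑ i : β,
    Mterm η (η * (dimEig ρ η : ℝ)) (evalsR (ptraceA (trunc ρ η)) i)

/-- the measure `M` of nonclassical correlation -/
def Mmeas {α β : Type*} [Fintype α] [Fintype β] [DecidableEq α] [DecidableEq β]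
    (ρ : Matrix (α × β) (α × β) ℂ) : ℝ := (MmeasA ρ + MmeasB ρ) / 2

def IsDensityMatrix {n : Type*} [Fintype n] [DecidableEq n] (ρ : Matrix n n ℂ) : Prop :=
  ρ.PosSemidef ∧ ρ.trace = 1

/-- ρ admits an eigenbasis consisting of product vectors -/
def HasProductEigenbasis {α β : Type*} [Fintype α] [Fintype β] [DecidableEq α] [DecidableEq β]
    (ρ : Matrix (α × β) (α × β) ℂ) : Prop :=
  ∃ (a : α → α → ℂ) (b : β → β → ℂ) (e : α → β → ℝ),
    (∀ j j', ∑ i, star (a j i) * a j' i = if j = j' then 1 else 0) ∧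
    (∀ k k', ∑ i, star (b k i) * b k' i = if k = k' then 1 else 0) ∧
    ρ = ∑ j : α, ∑ k : β,
      (e j k : ℂ) • (vecMulVec (a j) (star (a j)) ⊗ₖ vecMulVec (b k) (star (b k)))


/-- the von Neumann entropy (base-2) of a Hermitian matrix -/
def vonNeumannEntropy {n : Type*} [Fintype n] [DecidableEq n] (A : Matrix n n ℂ) : ℝ :=
  ∑ i, -(evalsR A i * Real.logb 2 (evalsR A i))

/-! ### auxiliary lemmas -/

section Aux
open Module LinearMap

lemma nim_one_eq_zero {x : ℝ} (h0 : 0 ≤ x) (h2 : x ≤ 1/2) : nim 1 x = 0 := by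
  have hfl : ⌊x / 1⌋ = 0 := by
    rw [div_one]; exact Int.floor_eq_zero_iff.2 ⟨h0, by linarith⟩
  rw [nim, if_neg one_ne_zero, hfl]
  rcases eq_or_lt_of_le h0 with h|h
  · have : ⌈x / 1⌉ = 0 := by rw [div_one, ← h]; simp
    rw [this]; simp
  · have hcl : ⌈x / 1⌉ = 1 := by
      rw [div_one]; exact Int.ceil_eq_iff.2 ⟨by push_cast; linarith, by push_cast; linarith⟩
    rw [hcl]; rw [if_pos (by push_cast; linarith)]; simp

lemma Mterm_one {x : ℝ} (h0 : 0 ≤ x) (h2 : x ≤ 1/2) :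
    Mterm 1 1 x = -(x * Real.logb 2 x) := by
  rw [Mterm, nim_one_eq_zero h0 h2, sub_zero, abs_of_nonneg h0, div_one]

lemma Mterm_zero (T : ℝ) : Mterm 0 T 0 = 0 := by
  simp [Mterm, nim]

lemma rank_add_nullity {m n : Type*} [Fintype m] [Fintype n] [DecidableEq n]
    (X : Matrix m n ℂ) :
    X.rank + finrank ℂ (ker X.mulVecLin) = Fintype.card n := by
  rw [Matrix.rank, LinearMap.finrank_range_add_finrank_ker,
    Module.finrank_fintype_fun_eq_card]

-- multiplicity of η as eigenvalue, via rank
lemma mult_add_rank {n : Type*} [Fintype n] [DecidableEq n] {M : Matrix n n ℂ}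
    (hM : M.IsHermitian) (η : ℝ) :
    (univ.filter fun k => hM.eigenvalues k = η).card + (M - (η : ℂ) • 1).rank
      = Fintype.card n := by
  have hU : IsUnit (det (hM.eigenvectorUnitary : Matrix n n ℂ)) := by
    apply isUnit_iff_ne_zero.2
    intro h
    have := (Unitary.mul_star_self_of_mem hM.eigenvectorUnitary.2)
    have hd := congrArg det this
    rw [det_mul, h, zero_mul] at hd
    simp at hd
  have hUs : IsUnit (det (star (hM.eigenvectorUnitary : Matrix n n ℂ))) := by
    rw [star_eq_conjTranspose, det_conjTranspose]
    exact hU.star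
  have hdecomp : M - (η : ℂ) • 1 =
      (hM.eigenvectorUnitary : Matrix n n ℂ) *
        diagonal (fun k => (hM.eigenvalues k : ℂ) - η) *
        (star (hM.eigenvectorUnitary : Matrix n n ℂ)) := by
    have h1 : (η : ℂ) • (1 : Matrix n n ℂ) =
        (hM.eigenvectorUnitary : Matrix n n ℂ) * ((η : ℂ) • 1) *
          (star (hM.eigenvectorUnitary : Matrix n n ℂ)) := by
      rw [Matrix.mul_smul, Matrix.smul_mul, mul_one,
        (Matrix.mem_unitaryGroup_iff).mp hM.eigenvectorUnitary.2]
    calc M - (η : ℂ) • 1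
        = (hM.eigenvectorUnitary : Matrix n n ℂ) *
            diagonal (RCLike.ofReal ∘ hM.eigenvalues) *
            (star (hM.eigenvectorUnitary : Matrix n n ℂ)) - (η:ℂ) • 1 := by
          conv_lhs => rw [hM.spectral_theorem, Unitary.conjStarAlgAut_apply]
      _ = _ := by
          rw [h1, ← Matrix.sub_mul, ← Matrix.mul_sub]
          congr 2
          rw [Matrix.smul_one_eq_diagonal, diagonal_sub]
          rfl
  have hrank : (M - (η : ℂ) • 1).rank
      = (diagonal (fun k => (hM.eigenvalues k : ℂ) - η)).rank := by
    rw [hdecomp, rank_mul_eq_left_of_isUnit_det _ _ hUs,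
      rank_mul_eq_right_of_isUnit_det _ _ hU]
  rw [hrank, Matrix.rank_diagonal]
  have h2 : Fintype.card {i // (fun k => (hM.eigenvalues k : ℂ) - η) i ≠ 0}
      = (univ.filter fun k => ¬ hM.eigenvalues k = η).card := by
    rw [Fintype.card_subtype]
    congr 1
    apply Finset.filter_congr
    intro k _
    simp only [ne_eq, sub_eq_zero]
    norm_cast
  rw [h2, Finset.card_filter_add_card_filter_not (fun k => hM.eigenvalues k = η)]
  simp

lemma finrank_ker_le {α β : Type*} [Fintype α] [Fintype β] [DecidableEq α] [DecidableEq β]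
    (A : Matrix α β ℂ) {η : ℂ} (hη : η ≠ 0) :
    finrank ℂ (ker (A * Aᴴ - η • 1).mulVecLin) ≤
      finrank ℂ (ker (Aᴴ * A - η • 1).mulVecLin) := by
  have hmap : ∀ v ∈ ker (A * Aᴴ - η • 1).mulVecLin,
      Aᴴ.mulVecLin v ∈ ker (Aᴴ * A - η • 1).mulVecLin := by
    intro v hv
    rw [mem_ker, mulVecLin_apply] at hv ⊢
    rw [sub_mulVec, smul_mulVec, one_mulVec] at hv ⊢
    rw [sub_eq_zero] at hv
    rw [mulVecLin_apply, mulVec_mulVec, Matrix.mul_assoc, ← mulVec_mulVec, hv, mulVec_smul,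
      sub_self]
  refine LinearMap.finrank_le_finrank_of_injective
    (f := (Aᴴ.mulVecLin).restrict hmap) ?_
  rw [← LinearMap.ker_eq_bot, LinearMap.ker_restrict]
  rw [Submodule.eq_bot_iff]
  rintro ⟨v, hv⟩ h
  rw [Submodule.mem_comap, Submodule.subtype_apply, mem_ker, mulVecLin_apply] at h
  rw [mem_ker, mulVecLin_apply, sub_mulVec, smul_mulVec, one_mulVec,
    sub_eq_zero, ← mulVec_mulVec, h, mulVec_zero] at hv
  have hv0 : v = 0 := by
    have := smul_eq_zero.1 hv.symm
    tauto
  simp [hv0]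

lemma finrank_ker_eq {α β : Type*} [Fintype α] [Fintype β] [DecidableEq α] [DecidableEq β]
    (A : Matrix α β ℂ) {η : ℂ} (hη : η ≠ 0) :
    finrank ℂ (ker (A * Aᴴ - η • 1).mulVecLin) =
      finrank ℂ (ker (Aᴴ * A - η • 1).mulVecLin) := by
  refine le_antisymm (finrank_ker_le A hη) ?_
  have := finrank_ker_le Aᴴ hη
  rwa [conjTranspose_conjTranspose] at this

lemma mult_mul_conjTranspose_eq {α β : Type*} [Fintype α] [Fintype β] [DecidableEq α]
    [DecidableEq β] (A : Matrix α β ℂ) {η : ℝ} (hη : η ≠ 0)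
    (hM : (A * Aᴴ).IsHermitian) (hN : (Aᴴ * A).IsHermitian) :
    (univ.filter fun k => hM.eigenvalues k = η).card
      = (univ.filter fun k => hN.eigenvalues k = η).card := by
  have hηC : (η : ℂ) ≠ 0 := by exact_mod_cast hη
  have h1 := mult_add_rank hM η
  have h2 := mult_add_rank hN η
  have h3 := rank_add_nullity (A * Aᴴ - (η : ℂ) • 1)
  have h4 := rank_add_nullity (Aᴴ * A - (η : ℂ) • 1)
  have h5 := finrank_ker_eq A hηC
  omega

lemma conj_eq_transpose_conjTranspose {m n : Type*} (X : Matrix m n ℂ) :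
    X.map (starRingEnd ℂ) = (Xᴴ)ᵀ := by
  ext i j; simp [conjTranspose_apply]

lemma mult_conj_eq {n : Type*} [Fintype n] [DecidableEq n] (M : Matrix n n ℂ)
    (hM : M.IsHermitian) (hMc : (M.map (starRingEnd ℂ)).IsHermitian) (η : ℝ) :
    (univ.filter fun k => hMc.eigenvalues k = η).card
      = (univ.filter fun k => hM.eigenvalues k = η).card := by
  have h1 := mult_add_rank hM η
  have h2 := mult_add_rank hMc η
  have hmap : M.map (starRingEnd ℂ) - (η : ℂ) • 1 = (M - (η : ℂ) • 1).map (starRingEnd ℂ) := by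
    ext i j
    by_cases h : i = j <;>
      simp [Matrix.map_apply, Matrix.smul_apply, Matrix.one_apply, h, Matrix.sub_apply]
  have hrank : (M.map (starRingEnd ℂ) - (η : ℂ) • 1).rank = (M - (η : ℂ) • 1).rank := by
    rw [hmap, conj_eq_transpose_conjTranspose, rank_transpose, rank_conjTranspose]
  omega

lemma evalsR_of_herm {n : Type*} [Fintype n] [DecidableEq n] {A : Matrix n n ℂ}
    (h : A.IsHermitian) : evalsR A = h.eigenvalues := by
  rw [evalsR, dif_pos h]

lemma evalsR_zero {n : Type*} [Fintype n] [DecidableEq n] :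
    evalsR (0 : Matrix n n ℂ) = 0 := by
  have h : (0 : Matrix n n ℂ).IsHermitian := isHermitian_zero
  rw [evalsR_of_herm h]
  ext k
  have hv := h.mulVec_eigenvectorBasis k
  rw [zero_mulVec] at hv
  have hne : (⇑(h.eigenvectorBasis k) : n → ℂ) ≠ 0 := by
    intro hh
    exact h.eigenvectorBasis.orthonormal.ne_zero k (by ext i; exact congrFun hh i)
  have := smul_eq_zero.1 hv.symm
  rcases this with h' | h'
  · exact h'
  · exact absurd h' hne

-- entrywise spectral theorem
lemma spectral_entry {n : Type*} [Fintype n] [DecidableEq n] {A : Matrix n n ℂ}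
    (h : A.IsHermitian) (i j : n) :
    A i j = ∑ k, (h.eigenvalues k : ℂ) * (h.eigenvectorBasis k i)
      * star (h.eigenvectorBasis k j) := by
  conv_lhs => rw [h.spectral_theorem, Unitary.conjStarAlgAut_apply]
  rw [Matrix.mul_apply]
  apply Finset.sum_congr rfl
  intro k _
  rw [Matrix.mul_apply, Finset.sum_eq_single k]
  · simp only [diagonal_apply_eq, conjTranspose_apply, IsHermitian.eigenvectorUnitary_apply,
      Function.comp_apply, star_eq_conjTranspose]
    rw [mul_right_comm, mul_comm, ← mul_assoc]
    norm_cast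
  · intro l _ hl
    simp [diagonal_apply_ne _ hl]
  · simp

lemma mult_evalsR_mul_conjTranspose {α β : Type*} [Fintype α] [Fintype β] [DecidableEq α]
    [DecidableEq β] (A : Matrix α β ℂ) {η : ℝ} (hη : η ≠ 0) :
    (univ.filter fun k => evalsR (A * Aᴴ) k = η).card
      = (univ.filter fun k => evalsR (Aᴴ * A) k = η).card := by
  have hM := isHermitian_mul_conjTranspose_self A
  have hN := isHermitian_conjTranspose_mul_self A
  rw [evalsR_of_herm hM, evalsR_of_herm hN]
  exact mult_mul_conjTranspose_eq A hη hM hN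

lemma mult_evalsR_conj {n : Type*} [Fintype n] [DecidableEq n] (M : Matrix n n ℂ)
    (hM : M.IsHermitian) (η : ℝ) :
    (univ.filter fun k => evalsR (M.map (starRingEnd ℂ)) k = η).card
      = (univ.filter fun k => evalsR M k = η).card := by
  have hMc : (M.map (starRingEnd ℂ)).IsHermitian := by
    rw [conj_eq_transpose_conjTranspose, hM.eq]
    exact hM.transpose
  rw [evalsR_of_herm hM, evalsR_of_herm hMc]
  exact mult_conj_eq M hM hMc η

-- transfer of a sum of a function vanishing at zero along equal multiplicities
lemma sum_f_eq_of_mult_eq {α β : Type*} [Fintype α] [Fintype β]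
    (c : α → ℝ) (d : β → ℝ) (f : ℝ → ℝ) (hf0 : f 0 = 0)
    (h : ∀ η : ℝ, η ≠ 0 →
      (univ.filter fun a => c a = η).card = (univ.filter fun b => d b = η).card) :
    ∑ i, f (c i) = ∑ j, f (d j) := by
  rw [Finset.sum_comp f c, Finset.sum_comp f d]
  rw [Finset.sum_subset (Finset.subset_union_left
      (s₁ := Finset.image c univ) (s₂ := Finset.image d univ)),
    Finset.sum_subset (Finset.subset_union_right
      (s₁ := Finset.image c univ) (s₂ := Finset.image d univ))]
  · apply Finset.sum_congr rfl
    intro η _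
    by_cases hη : η = 0
    · subst hη; rw [hf0]; simp
    · rw [h η hη]
  · intro η _ hη
    have : (univ.filter fun b => d b = η).card = 0 := by
      rw [Finset.card_eq_zero, Finset.filter_eq_empty_iff]
      intro b _
      intro hb
      exact hη (Finset.mem_image.2 ⟨b, Finset.mem_univ b, hb⟩)
    rw [this, zero_smul]
  · intro η _ hη
    have : (univ.filter fun a => c a = η).card = 0 := by
      rw [Finset.card_eq_zero, Finset.filter_eq_empty_iff]
      intro a _
      intro ha
      exact hη (Finset.mem_image.2 ⟨a, Finset.mem_univ a, ha⟩)
    rw [this, zero_smul]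

end Aux

/-! ### pure state lemmas -/

section Pure
variable {α β : Type*} [Fintype α] [Fintype β] [DecidableEq α] [DecidableEq β]
variable (φ : α × β → ℂ)

omit [DecidableEq α] [DecidableEq β] in
lemma rho_herm : (vecMulVec φ (star φ)).IsHermitian := by
  ext i j
  simp [conjTranspose_apply, vecMulVec_apply, Pi.star_apply, mul_comm]

omit [DecidableEq α] [DecidableEq β] in
lemma ptraceB_zero : ptraceB (0 : Matrix (α × β) (α × β) ℂ) = 0 := by
  ext a a'; simp [ptraceB]

omit [DecidableEq α] [DecidableEq β] in
lemma ptraceA_zero : ptraceA (0 : Matrix (α × β) (α × β) ℂ) = 0 := by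
  ext b b'; simp [ptraceA]

omit [DecidableEq α] [DecidableEq β] in
lemma ptraceB_eq : ptraceB (vecMulVec φ (star φ))
    = (Matrix.of fun a b => φ (a, b)) * (Matrix.of fun a b => φ (a, b))ᴴ := by
  ext a a'
  simp [ptraceB, mul_apply, vecMulVec_apply, conjTranspose_apply]

omit [DecidableEq α] [DecidableEq β] in
lemma ptraceA_eq : ptraceA (vecMulVec φ (star φ))
    = (Matrix.of fun a b => φ (a, b))ᵀ * ((Matrix.of fun a b => φ (a, b))ᵀ)ᴴ := by
  ext b b'
  simp [ptraceA, mul_apply, vecMulVec_apply, conjTranspose_apply]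

omit [DecidableEq α] [DecidableEq β] in
lemma transpose_CT_mul_transpose_eq :
    ((Matrix.of fun a b => φ (a, b))ᵀ)ᴴ * (Matrix.of fun a b => φ (a, b))ᵀ
      = ((Matrix.of fun a b => φ (a, b)) * (Matrix.of fun a b => φ (a, b))ᴴ).map
          (starRingEnd ℂ) := by
  ext a a'
  simp only [Matrix.mul_apply, conjTranspose_apply, transpose_apply, Matrix.map_apply,
    Matrix.of_apply]
  rw [map_sum (starRingEnd ℂ)]
  apply Finset.sum_congr rfl
  intro b _
  rw [(starRingEnd ℂ).map_mul]
  simp only [RCLike.star_def, Complex.conj_conj]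

variable (hφ : ∑ p, star (φ p) * φ p = 1)
include hφ

omit [DecidableEq α] [DecidableEq β] in
lemma rho_idem : vecMulVec φ (star φ) * vecMulVec φ (star φ) = vecMulVec φ (star φ) := by
  ext i j
  rw [mul_apply]
  simp only [vecMulVec_apply, Pi.star_apply]
  calc ∑ p, φ i * star (φ p) * (φ p * star (φ j))
      = (φ i * star (φ j)) * ∑ p, star (φ p) * φ p := by
        rw [Finset.mul_sum]; congr 1; ext p; ring
    _ = φ i * star (φ j) := by rw [hφ, mul_one]

omit [DecidableEq α] [DecidableEq β] in
lemma rho_trace : (vecMulVec φ (star φ)).trace = 1 := by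
  rw [Matrix.trace]
  simp only [diag_apply, vecMulVec_apply, Pi.star_apply]
  rw [← hφ]
  congr 1; ext p; ring

lemma rho_eval_dichotomy (k : α × β) :
    (rho_herm φ).eigenvalues k = 0 ∨ (rho_herm φ).eigenvalues k = 1 := by
  set hH := rho_herm φ
  have hv := hH.mulVec_eigenvectorBasis k
  have hv2 : vecMulVec φ (star φ) *ᵥ (vecMulVec φ (star φ) *ᵥ ⇑(hH.eigenvectorBasis k))
      = (hH.eigenvalues k * hH.eigenvalues k) • ⇑(hH.eigenvectorBasis k) := by
    rw [hv, mulVec_smul, hv, smul_smul]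
  rw [mulVec_mulVec, rho_idem φ hφ, hv] at hv2
  have hne : (⇑(hH.eigenvectorBasis k) : α × β → ℂ) ≠ 0 := by
    intro h
    exact hH.eigenvectorBasis.orthonormal.ne_zero k (by ext i; exact congrFun h i)
  have : (hH.eigenvalues k - hH.eigenvalues k * hH.eigenvalues k) • ⇑(hH.eigenvectorBasis k)
      = 0 := by rw [sub_smul, hv2, sub_self]
  rcases smul_eq_zero.1 this with h | h
  · have : hH.eigenvalues k * (1 - hH.eigenvalues k) = 0 := by ring_nf; linarith [h]
    rcases mul_eq_zero.1 this with h' | h'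
    · exact Or.inl h'
    · exact Or.inr (by linarith)
  · exact absurd h hne

lemma rho_sum_eigenvalues : ∑ k, (rho_herm φ).eigenvalues k = 1 := by
  set hH := rho_herm φ
  have h1 : (vecMulVec φ (star φ)).trace = ∑ k, ((hH.eigenvalues k : ℂ)) := by
    conv_lhs => rw [hH.spectral_theorem, Unitary.conjStarAlgAut_apply]
    rw [trace_mul_cycle, Unitary.coe_star_mul_self hH.eigenvectorUnitary, Matrix.one_mul,
      trace_diagonal]
    rfl
  rw [rho_trace φ hφ] at h1
  have := h1.symm
  rw [← Complex.ofReal_sum] at this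
  exact_mod_cast this

lemma rho_card_one : (univ.filter fun k => (rho_herm φ).eigenvalues k = 1).card = 1 := by
  set hH := rho_herm φ
  have hs := rho_sum_eigenvalues φ hφ
  rw [← Finset.sum_filter_add_sum_filter_not univ (fun k => hH.eigenvalues k = 1)] at hs
  have h1 : ∑ k ∈ univ.filter (fun k => hH.eigenvalues k = 1), hH.eigenvalues k
      = (univ.filter fun k => hH.eigenvalues k = 1).card := by
    rw [Finset.sum_congr rfl (fun k hk => (Finset.mem_filter.1 hk).2), Finset.sum_const,
      nsmul_eq_mul, mul_one]
  have h2 : ∑ k ∈ univ.filter (fun k => ¬ hH.eigenvalues k = 1), hH.eigenvalues k = 0 := by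
    apply Finset.sum_eq_zero
    intro k hk
    rcases rho_eval_dichotomy φ hφ k with h | h
    · exact h
    · exact absurd h (Finset.mem_filter.1 hk).2
  rw [h1, h2, add_zero] at hs
  exact_mod_cast hs

lemma eigProj_one : eigProj (vecMulVec φ (star φ)) 1 = vecMulVec φ (star φ) := by
  have hH := rho_herm φ
  rw [eigProj, dif_pos hH]
  ext i j
  rw [Matrix.sum_apply]
  conv_rhs => rw [spectral_entry hH i j]
  rw [← Finset.sum_filter_add_sum_filter_not univ (fun k => hH.eigenvalues k = 1)]
  have h2 : ∑ k ∈ univ.filter (fun k => ¬ hH.eigenvalues k = 1),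
      (hH.eigenvalues k : ℂ) * (hH.eigenvectorBasis k i) * star (hH.eigenvectorBasis k j)
        = 0 := by
    apply Finset.sum_eq_zero
    intro k hk
    rcases rho_eval_dichotomy φ hφ k with h | h
    · rw [h]; simp
    · exact absurd h (Finset.mem_filter.1 hk).2
  rw [h2, add_zero]
  apply Finset.sum_congr rfl
  intro k hk
  rw [(Finset.mem_filter.1 hk).2]
  simp [vecMulVec_apply]

lemma trunc_one : trunc (vecMulVec φ (star φ)) 1 = vecMulVec φ (star φ) := by
  rw [trunc, eigProj_one φ hφ]
  simp

lemma dimEig_one : dimEig (vecMulVec φ (star φ)) 1 = 1 := by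
  rw [dimEig, dif_pos (rho_herm φ)]
  exact rho_card_one φ hφ

end Pure

/-- for a pure bipartite state all of whose Schmidt coefficients are
`≤ 1/√2` (i.e. all reduced eigenvalues `≤ 1/2`), `M` equals the entropy of
entanglement. -/
theorem Mmeas_pure_eq_entropy_of_entanglement
    {α β : Type*} [Fintype α] [Fintype β] [DecidableEq α] [DecidableEq β]
    (φ : α × β → ℂ) (hφ : ∑ p, star (φ p) * φ p = 1)
    (hsc : ∀ i, evalsR (ptraceB (vecMulVec φ (star φ))) i ≤ 1 / 2) :
    Mmeas (vecMulVec φ (star φ)) =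
      vonNeumannEntropy (ptraceB (vecMulVec φ (star φ))) := by
  set ρ := vecMulVec φ (star φ) with hρdef
  have hH : ρ.IsHermitian := rho_herm φ
  set A : Matrix α β ℂ := Matrix.of (fun a b => φ (a, b)) with hAdef
  have hPB : ptraceB ρ = A * Aᴴ := ptraceB_eq φ
  have hPA : ptraceA ρ = Aᵀ * (Aᵀ)ᴴ := ptraceA_eq φ
  have hPBpsd : (ptraceB ρ).PosSemidef := by
    rw [hPB]; exact posSemidef_self_mul_conjTranspose A
  have hPApsd : (ptraceA ρ).PosSemidef := by
    rw [hPA]; exact posSemidef_self_mul_conjTranspose Aᵀ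
  have hc0 : ∀ i, 0 ≤ evalsR (ptraceB ρ) i := by
    intro i
    rw [evalsR_of_herm hPBpsd.1]
    exact hPBpsd.eigenvalues_nonneg i
  have hd0 : ∀ j, 0 ≤ evalsR (ptraceA ρ) j := by
    intro j
    rw [evalsR_of_herm hPApsd.1]
    exact hPApsd.eigenvalues_nonneg j
  -- equality of multiplicities of nonzero reduced eigenvalues
  have hmult : ∀ η : ℝ, η ≠ 0 →
      (univ.filter fun i => evalsR (ptraceB ρ) i = η).card
        = (univ.filter fun j => evalsR (ptraceA ρ) j = η).card := by
    intro η hη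
    rw [hPB, hPA]
    rw [mult_evalsR_mul_conjTranspose (A := Aᵀ) hη]
    rw [transpose_CT_mul_transpose_eq φ]
    rw [mult_evalsR_conj _ (isHermitian_mul_conjTranspose_self A)]
  -- bound on reduced-A eigenvalues
  have hd2 : ∀ j, evalsR (ptraceA ρ) j ≤ 1 / 2 := by
    intro j
    by_cases h : evalsR (ptraceA ρ) j = 0
    · rw [h]; norm_num
    · have hcard := hmult _ h
      have hjmem : j ∈ univ.filter fun j' => evalsR (ptraceA ρ) j' = evalsR (ptraceA ρ) j := by
        simp
      have hne : (univ.filter fun i => evalsR (ptraceB ρ) i = evalsR (ptraceA ρ) j).Nonempty := by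
        rw [← Finset.card_pos, hcard]
        exact Finset.card_pos.2 ⟨j, hjmem⟩
      obtain ⟨i, hi⟩ := hne
      rw [← (Finset.mem_filter.1 hi).2]
      exact hsc i
  -- entropy transfer between the two sides
  have hsum : ∑ i, -(evalsR (ptraceB ρ) i * Real.logb 2 (evalsR (ptraceB ρ) i))
      = ∑ j, -(evalsR (ptraceA ρ) j * Real.logb 2 (evalsR (ptraceA ρ) j)) :=
    sum_f_eq_of_mult_eq _ _ (fun x => -(x * Real.logb 2 x)) (by simp) hmult
  -- structure of the image of evalsR ρ
  have himgsub : Finset.image (evalsR ρ) univ ⊆ ({0, 1} : Finset ℝ) := by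
    intro η hη
    obtain ⟨k, _, hk⟩ := Finset.mem_image.1 hη
    rw [evalsR_of_herm hH] at hk
    rcases rho_eval_dichotomy φ hφ k with h | h <;> rw [← hk, h] <;> simp
  have h1mem : (1 : ℝ) ∈ Finset.image (evalsR ρ) univ := by
    have hcard := rho_card_one φ hφ
    have hne : (univ.filter fun k => (rho_herm φ).eigenvalues k = 1).Nonempty := by
      rw [← Finset.card_pos, hcard]; norm_num
    obtain ⟨k, hk⟩ := hne
    refine Finset.mem_image.2 ⟨k, Finset.mem_univ k, ?_⟩
    rw [evalsR_of_herm hH]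
    exact (Finset.mem_filter.1 hk).2
  have htrunc0 : trunc ρ 0 = 0 := by rw [trunc]; simp
  have htrunc1 : trunc ρ 1 = ρ := trunc_one φ hφ
  have hdim1 : dimEig ρ 1 = 1 := dimEig_one φ hφ
  -- the side-A sum
  have hFA0 : ∑ i : α, Mterm 0 (0 * (dimEig ρ 0 : ℝ)) (evalsR (ptraceB (trunc ρ 0)) i) = 0 := by
    rw [htrunc0, ptraceB_zero, evalsR_zero]
    apply Finset.sum_eq_zero
    intro i _
    exact Mterm_zero _
  have hFA1 : ∑ i : α, Mterm 1 (1 * (dimEig ρ 1 : ℝ)) (evalsR (ptraceB (trunc ρ 1)) i)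
      = ∑ i, -(evalsR (ptraceB ρ) i * Real.logb 2 (evalsR (ptraceB ρ) i)) := by
    rw [htrunc1, hdim1]
    apply Finset.sum_congr rfl
    intro i _
    rw [show ((1 : ℝ) * ((1 : ℕ) : ℝ)) = 1 by norm_num]
    exact Mterm_one (hc0 i) (hsc i)
  have hFB0 : ∑ j : β, Mterm 0 (0 * (dimEig ρ 0 : ℝ)) (evalsR (ptraceA (trunc ρ 0)) j) = 0 := by
    rw [htrunc0, ptraceA_zero, evalsR_zero]
    apply Finset.sum_eq_zero
    intro j _
    exact Mterm_zero _
  have hFB1 : ∑ j : β, Mterm 1 (1 * (dimEig ρ 1 : ℝ)) (evalsR (ptraceA (trunc ρ 1)) j)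
      = ∑ i, -(evalsR (ptraceB ρ) i * Real.logb 2 (evalsR (ptraceB ρ) i)) := by
    rw [htrunc1, hdim1, hsum]
    apply Finset.sum_congr rfl
    intro j _
    rw [show ((1 : ℝ) * ((1 : ℕ) : ℝ)) = 1 by norm_num]
    exact Mterm_one (hd0 j) (hd2 j)
  have hMA : MmeasA ρ = ∑ i, -(evalsR (ptraceB ρ) i * Real.logb 2 (evalsR (ptraceB ρ) i)) := by
    rw [MmeasA]
    rw [Finset.sum_subset himgsub]
    · rw [show ({0, 1} : Finset ℝ) = insert 0 {1} from rfl,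
        Finset.sum_insert (by norm_num), Finset.sum_singleton, hFA0, hFA1, zero_add]
    · intro η hη hnot
      have : η = 0 := by
        rcases Finset.mem_insert.1 hη with h | h
        · exact h
        · exact absurd (Finset.mem_singleton.1 h ▸ h1mem) (by simpa [Finset.mem_singleton.1 h]
            using hnot)
      rw [this]
      exact hFA0
  have hMB : MmeasB ρ = ∑ i, -(evalsR (ptraceB ρ) i * Real.logb 2 (evalsR (ptraceB ρ) i)) := by
    rw [MmeasB]
    rw [Finset.sum_subset himgsub]
    · rw [show ({0, 1} : Finset ℝ) = insert 0 {1} from rfl,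
        Finset.sum_insert (by norm_num), Finset.sum_singleton, hFB0, hFB1, zero_add]
    · intro η hη hnot
      have : η = 0 := by
        rcases Finset.mem_insert.1 hη with h | h
        · exact h
        · exact absurd (Finset.mem_singleton.1 h ▸ h1mem) (by simpa [Finset.mem_singleton.1 h]
            using hnot)
      rw [this]
      exact hFB0
  rw [Mmeas, hMA, hMB, vonNeumannEntropy]
  ring

end
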